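/- Let F be a filter on ω. Then F is non-meager (as a subset of 2^ω) if and only if for every partition {Jₙ : n < ω} of ω into finite sets, there exists X ∈ F such that the set {n < ω : X ∩ Jₙ = ∅} is infinite. -/

import Mathlib

open Set

/-- A point of the Cantor space `α → Bool`, viewed as a subset of `α`
(the identification of `2^ω` with `𝒫(ω)` via characteristic functions). -/
def toSet {α : Type*} (x : α → Bool) : Set α := {a | x a = true}

/-- The copy of a family `F ⊆ 𝒫(α)` inside the Cantor space `α → Bool`. -/
def cantorCopy {α : Type*} (F : Set (Set α)) : Set (α → Bool) := toSet ⁻¹' F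

/-- `F` is a filter on `α`: contains the whole set, not `∅`, closed under
finite intersections and supersets. -/
def IsFilterOn {α : Type*} (F : Set (Set α)) : Prop :=
  Set.univ ∈ F ∧ ∅ ∉ F ∧ (∀ A B : Set α, A ∈ F → B ∈ F → A ∩ B ∈ F) ∧
    ∀ A B : Set α, A ∈ F → A ⊆ B → B ∈ F

/-- `F` extends the Fréchet filter: every cofinite set belongs to `F`. -/
def ExtendsFrechet {α : Type*} (F : Set (Set α)) : Prop :=
  ∀ A : Set α, Aᶜ.Finite → A ∈ F

/-- `F` is a P-filter: every countable subfamily has a pseudo-intersection in `F`. -/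
def IsPFilterOn {α : Type*} (F : Set (Set α)) : Prop :=
  ∀ X : ℕ → Set α, (∀ n, X n ∈ F) → ∃ Y ∈ F, ∀ n, (Y \ X n).Finite

/-- `F` is non-meager as a subset of the Cantor space `α → Bool`. -/
def NonMeagerFamily {α : Type*} (F : Set (Set α)) : Prop :=
  ¬ IsMeagre (cantorCopy F)

/-- `I` is an ideal on `α`: contains `∅`, not the whole set, closed under
finite unions and subsets. -/
def IsIdealOn {α : Type*} (I : Set (Set α)) : Prop :=
  ∅ ∈ I ∧ Set.univ ∉ I ∧ (∀ A B : Set α, A ∈ I → B ∈ I → A ∪ B ∈ I) ∧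
    ∀ A B : Set α, A ∈ I → B ⊆ A → B ∈ I

/-- `I` contains all finite sets. -/
def ContainsFinites {α : Type*} (I : Set (Set α)) : Prop :=
  ∀ A : Set α, A.Finite → A ∈ I

/-- `I` is a P-ideal: every countable subfamily has a member of `I`
almost containing each of them. -/
def IsPIdealOn {α : Type*} (I : Set (Set α)) : Prop :=
  ∀ X : ℕ → Set α, (∀ n, X n ∈ I) → ∃ Y ∈ I, ∀ n, (X n \ Y).Finite

/-- A topological space is countable dense homogeneous. -/
def CDH (X : Type*) [TopologicalSpace X] : Prop :=
  ∀ D E : Set X, D.Countable → Dense D → E.Countable → Dense E →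
    ∃ h : X ≃ₜ X, h '' D = E

/-- `D` is a (set-theoretic) subfamily of `F` that is dense in `F` with respect to
the subspace topology `F` inherits from the Cantor space. -/
def DenseIn {α : Type*} (D F : Set (Set α)) : Prop :=
  D ⊆ F ∧ cantorCopy F ⊆ closure (cantorCopy D)

lemma cylinder_isOpen (x : ℕ → Bool) (m : ℕ) :
    IsOpen {z : ℕ → Bool | ∀ a < m, z a = x a} := by
  have h : {z : ℕ → Bool | ∀ a < m, z a = x a} = Set.pi (Set.Iio m) (fun a => {x a}) := by
    ext z; simp [Set.mem_pi]
  rw [h]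
  exact isOpen_set_pi (Set.finite_Iio m) (fun a _ => isOpen_discrete _)

lemma exists_cylinder_subset {U : Set (ℕ → Bool)} (hU : IsOpen U) {y : ℕ → Bool}
    (hy : y ∈ U) : ∃ m, ∀ z, (∀ a < m, z a = y a) → z ∈ U := by
  obtain ⟨I, u, hIu, hpi⟩ := isOpen_pi_iff.mp hU y hy
  refine ⟨(I.sup id) + 1, fun z hz => hpi ?_⟩
  rw [Set.mem_pi]
  intro a ha
  have h1 : z a = y a := hz a (Nat.lt_succ_of_le (Finset.le_sup (f := id) (Finset.mem_coe.mp ha)))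
  rw [h1]; exact (hIu a (Finset.mem_coe.mp ha)).2

lemma key_step {V : Set (ℕ → Bool)} (hVo : IsOpen V) (hVd : Dense V) (m : ℕ) :
    ∃ m', m < m' ∧ ∃ T : (ℕ → Bool) → (ℕ → Bool), ∀ x,
      (∀ a < m, T x a = x a) ∧ ∀ z, (∀ a < m', z a = T x a) → z ∈ V := by
  classical
  have step : ∀ σ : Fin m → Bool, ∃ (m' : ℕ) (y : ℕ → Bool),
      (∀ a, ∀ h : a < m, y a = σ ⟨a, h⟩) ∧ ∀ z, (∀ a < m', z a = y a) → z ∈ V := by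
    intro σ
    set x : ℕ → Bool := fun a => if h : a < m then σ ⟨a, h⟩ else false with hx
    obtain ⟨y, hyB, hyV⟩ := hVd.inter_open_nonempty _ (cylinder_isOpen x m)
      ⟨x, fun a _ => rfl⟩
    obtain ⟨m0, hm0⟩ := exists_cylinder_subset hVo hyV
    refine ⟨m0, y, fun a h => ?_, fun z hz => hm0 z hz⟩
    have h2 := hyB a h
    simpa [hx, h] using h2
  choose M Y hY hYV using step
  refine ⟨max (m + 1) (Finset.univ.sup M), lt_of_lt_of_le (Nat.lt_succ_self m) (le_max_left _ _),
    fun x => Y (fun i => x i), fun x => ⟨fun a ha => ?_, fun z hz => ?_⟩⟩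
  · show Y (fun i => x i) a = x a
    rw [hY (fun i => x i) a ha]
  · apply hYV (fun i => x i) z
    intro a ha
    exact hz a (lt_of_lt_of_le ha (le_trans (Finset.le_sup (Finset.mem_univ _)) (le_max_right _ _)))


/-- A filter `F` on `ω` (extending the Fréchet filter) is non-meager iff for every
partition of `ω` into finite sets `{Jₙ}` there is `X ∈ F` meeting only finitely many...
rather: with `{n : X ∩ Jₙ = ∅}` infinite. -/
theorem stmt10 (F : Set (Set ℕ)) (hF : IsFilterOn F) (hFr : ExtendsFrechet F) :
    NonMeagerFamily F ↔
      ∀ J : ℕ → Set ℕ, (∀ n, (J n).Finite) →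
        (Pairwise fun m n => Disjoint (J m) (J n)) → (⋃ n, J n) = Set.univ →
        ∃ X ∈ F, {n : ℕ | X ∩ J n = ∅}.Infinite := by
  constructor
  · intro hNM J hJfin hJdisj hJun
    classical
    by_contra hcon
    push_neg at hcon
    set E : ℕ → Set (ℕ → Bool) := fun m => {x | ∀ n, m ≤ n → (toSet x ∩ J n).Nonempty} with hE
    have hcover : cantorCopy F ⊆ ⋃ m, E m := by
      intro x hx
      have hfin : {n | toSet x ∩ J n = ∅}.Finite := hcon (toSet x) hx
      obtain ⟨b, hb⟩ := hfin.bddAbove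
      refine Set.mem_iUnion.mpr ⟨b + 1, fun n hn => ?_⟩
      rw [Set.nonempty_iff_ne_empty]
      intro hne
      exact absurd (hb hne) (by omega)
    have hclosed : ∀ m, IsClosed (E m) := by
      intro m
      have h1 : E m = ⋂ n ∈ Set.Ici m, {x : ℕ → Bool | (toSet x ∩ J n).Nonempty} := by
        ext x; simp [hE]
      rw [h1]
      refine isClosed_biInter (fun n _ => ?_)
      have h2 : {x : ℕ → Bool | (toSet x ∩ J n).Nonempty} = ⋃ a ∈ J n, {x : ℕ → Bool | x a = true} := by
        ext x
        simp only [Set.mem_setOf_eq, Set.mem_iUnion, Set.Nonempty]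
        constructor
        · rintro ⟨a, ha1, ha2⟩; exact ⟨a, ha2, ha1⟩
        · rintro ⟨a, ha2, ha1⟩; exact ⟨a, ha1, ha2⟩
      rw [h2]
      refine (hJfin n).isClosed_biUnion (fun a _ => ?_)
      have h3 : IsClosed ((fun x : ℕ → Bool => x a) ⁻¹' {true}) :=
        (isClosed_singleton (x := true)).preimage (continuous_apply a)
      exact h3
    have hnwd : ∀ m, IsNowhereDense (E m) := by
      intro m
      rw [(hclosed m).isNowhereDense_iff, ← Set.not_nonempty_iff_eq_empty]
      rintro ⟨y, hy⟩
      obtain ⟨m0, hm0⟩ := exists_cylinder_subset isOpen_interior hy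
      set z : ℕ → Bool := fun a => if a < m0 then y a else false with hz
      have hzE : z ∈ E m := interior_subset (hm0 z (fun a ha => if_pos ha))
      have hfin : {n | (J n ∩ Set.Iio m0).Nonempty}.Finite := by
        apply Set.Finite.subset (Set.Finite.biUnion (Set.finite_Iio m0)
          (fun a (_ : a ∈ Set.Iio m0) => Set.Subsingleton.finite (s := {n | a ∈ J n}) ?_))
        · rintro n ⟨a, haJ, ham⟩
          exact Set.mem_biUnion ham haJ
        · intro n1 h1 n2 h2
          by_contra hne
          exact Set.disjoint_left.mp (hJdisj hne) h1 h2
      obtain ⟨b, hb⟩ := hfin.bddAbove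
      set k := max m (b + 1) with hk
      obtain ⟨a, haz, haJ⟩ := hzE k (le_max_left _ _)
      have haltm0 : a < m0 := by
        by_contra hge
        have : z a = false := if_neg hge
        exact absurd (show z a = true from haz) (by rw [this]; simp)
      have : k ∈ {n | (J n ∩ Set.Iio m0).Nonempty} := ⟨a, haJ, haltm0⟩
      exact absurd (hb this) (by omega)
    apply hNM
    rw [isMeagre_iff_countable_union_isNowhereDense]
    refine ⟨Set.range E, ?_, Set.countable_range E, ?_⟩
    · rintro t ⟨m, rfl⟩; exact hnwd m
    · rwa [Set.sUnion_range]
  · intro h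
    classical
    intro hM
    rw [IsMeagre, mem_residual_iff] at hM
    obtain ⟨S, hSo, hSd, hScnt, hSsub⟩ := hM
    have htop : (fun _ : ℕ => true) ∈ cantorCopy F := by
      have h1 : toSet (fun _ : ℕ => true) = Set.univ := by ext a; simp [toSet]
      show toSet (fun _ : ℕ => true) ∈ F
      rw [h1]; exact hF.1
    rcases S.eq_empty_or_nonempty with hSe | hSne
    · subst hSe
      exact hSsub (by simp) htop
    obtain ⟨U, hUrange⟩ := hScnt.exists_eq_range hSne
    have hUo : ∀ i, IsOpen (U i) := fun i => hSo _ (hUrange ▸ Set.mem_range_self i)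
    have hUd : ∀ i, Dense (U i) := fun i => hSd _ (hUrange ▸ Set.mem_range_self i)
    have hUsub : ∀ y : ℕ → Bool, (∀ i, y ∈ U i) → y ∉ cantorCopy F := by
      intro y hy hyF
      refine hSsub ?_ hyF
      rw [hUrange]
      exact Set.mem_sInter.mpr (by rintro t ⟨i, rfl⟩; exact hy i)
    -- decreasing finite intersections
    set V : ℕ → Set (ℕ → Bool) := fun k => Nat.rec (U 0) (fun j Vj => Vj ∩ U (j + 1)) k with hV
    have hVo : ∀ k, IsOpen (V k) := by
      intro k; induction k with
      | zero => exact hUo 0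
      | succ j ih => exact ih.inter (hUo (j + 1))
    have hVd : ∀ k, Dense (V k) := by
      intro k; induction k with
      | zero => exact hUd 0
      | succ j ih => exact ih.inter_of_isOpen_left (hUd (j + 1)) (hVo j)
    have hVU : ∀ i k, i ≤ k → V k ⊆ U i := by
      intro i k
      induction k with
      | zero => intro hi; rw [Nat.le_zero.mp hi]; exact subset_rfl
      | succ j ih =>
        intro hi
        rcases Nat.le_succ_iff.mp hi with h1 | h1
        · exact (Set.inter_subset_left).trans (ih h1)
        · rw [h1]; exact Set.inter_subset_right
    -- the recursive interval construction
    have key : ∀ k m, ∃ m', m < m' ∧ ∃ T : (ℕ → Bool) → (ℕ → Bool), ∀ x,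
        (∀ a < m, T x a = x a) ∧ ∀ z, (∀ a < m', z a = T x a) → z ∈ V k :=
      fun k m => key_step (hVo k) (hVd k) m
    choose M hMlt T hT using key
    set n : ℕ → ℕ := fun k => Nat.rec 0 (fun j nj => M j nj) k with hn
    have hnS : ∀ k, n (k + 1) = M k (n k) := fun k => rfl
    have hnlt : ∀ k, n k < n (k + 1) := fun k => hMlt k (n k)
    have hmono : StrictMono n := strictMono_nat_of_lt_succ hnlt
    set J : ℕ → Set ℕ := fun k => Set.Ico (n k) (n (k + 1)) with hJ
    have hJfin : ∀ k, (J k).Finite := fun k => Set.finite_Ico _ _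
    have hd : ∀ i j, i < j → Disjoint (J i) (J j) := by
      intro i j hij
      refine Set.disjoint_left.mpr ?_
      rintro a ⟨_, ha2⟩ ⟨ha3, _⟩
      exact absurd (lt_of_lt_of_le ha2 (hmono.monotone (Nat.succ_le_of_lt hij))) (not_lt.mpr ha3)
    have hJdisj : Pairwise fun i j => Disjoint (J i) (J j) := by
      intro i j hij
      rcases Ne.lt_or_gt hij with h1 | h1
      · exact hd i j h1
      · exact (hd j i h1).symm
    have hJun : (⋃ k, J k) = Set.univ := by
      ext a
      simp only [Set.mem_iUnion, Set.mem_univ, iff_true]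
      have hex : ∃ k, a < n k := ⟨a + 1, lt_of_lt_of_le (Nat.lt_succ_self a) hmono.le_apply⟩
      have hk0 := Nat.find_spec hex
      cases hk : Nat.find hex with
      | zero => rw [hk] at hk0; exact absurd hk0 (by simp [hn])
      | succ k =>
        rw [hk] at hk0
        have hmin : ¬ a < n k := Nat.find_min hex (by rw [hk]; exact Nat.lt_succ_self k)
        exact ⟨k, not_lt.mp hmin, hk0⟩
    obtain ⟨X, hXF, hXinf⟩ := h J hJfin hJdisj hJun
    set x : ℕ → Bool := fun a => decide (a ∈ X) with hx
    have htoX : toSet x = X := by ext a; simp [toSet, hx]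
    -- the recursive correction
    set g : ℕ → ℕ → Bool := fun k => Nat.rec x
      (fun j gj => if X ∩ J j = ∅ then (fun a => if a < n (j + 1) then T j (n j) gj a else gj a)
        else gj) k with hg
    have hgS : ∀ j, g (j + 1) = if X ∩ J j = ∅ then
        (fun a => if a < n (j + 1) then T j (n j) (g j) a else g j a) else g j := fun j => rfl
    have gskip : ∀ j a, a < n j → g (j + 1) a = g j a := by
      intro j a ha
      rw [hgS]
      split
      · show (if a < n (j + 1) then T j (n j) (g j) a else g j a) = g j a
        rw [if_pos (lt_trans ha (hnlt j))]
        exact (hT j (n j) (g j)).1 a ha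
      · rfl
    have gstab : ∀ k j, j ≤ k → ∀ a, a < n j → g k a = g j a := by
      intro k
      induction k with
      | zero => intro j hj a _; rw [Nat.le_zero.mp hj]
      | succ k ih =>
        intro j hj a ha
        rcases Nat.le_succ_iff.mp hj with h1 | h1
        · rw [gskip k a (lt_of_lt_of_le ha (hmono.monotone h1))]
          exact ih j h1 a ha
        · rw [h1]
    set Y : ℕ → Bool := fun a => g (a + 1) a with hY
    have han : ∀ a : ℕ, a < n (a + 1) :=
      fun a => lt_of_lt_of_le (Nat.lt_succ_self a) hmono.le_apply
    have Ystab : ∀ j a, a < n j → Y a = g j a := by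
      intro j a ha
      show g (a + 1) a = g j a
      rcases le_total (a + 1) j with h1 | h1
      · exact (gstab j (a + 1) h1 a (han a)).symm
      · exact gstab (a + 1) j h1 a ha
    have YsupX : X ⊆ toSet Y := by
      intro a haX
      show Y a = true
      have hxa : x a = true := by simp [hx, haX]
      show g (a + 1) a = true
      have hall : ∀ k, g k a = true := by
        intro k
        induction k with
        | zero => exact hxa
        | succ j ih =>
          rw [hgS]
          split
          · rename_i hjA
            show (if a < n (j + 1) then T j (n j) (g j) a else g j a) = true
            split
            · rename_i h2
              by_cases h3 : a < n j
              · rw [(hT j (n j) (g j)).1 a h3]; exact ih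
              · exact absurd (Set.mem_inter haX (show a ∈ J j from Set.mem_Ico.mpr ⟨not_lt.mp h3, h2⟩))
                  (by rw [hjA]; exact Set.notMem_empty a)
            · exact ih
          · exact ih
      exact hall (a + 1)
    have hYF : toSet Y ∈ F := hF.2.2.2 X (toSet Y) hXF YsupX
    have Yavoid : ∀ i, Y ∈ U i := by
      intro i
      obtain ⟨j, hjA, hij⟩ := hXinf.exists_gt i
      have hjA' : X ∩ J j = ∅ := hjA
      have hYV : Y ∈ V j := by
        apply (hT j (n j) (g j)).2 Y
        intro a ha
        have ha' : a < n (j + 1) := by rw [hnS]; exact ha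
        rw [Ystab (j + 1) a ha', hgS, if_pos hjA']
        show (if a < n (j + 1) then T j (n j) (g j) a else g j a) = T j (n j) (g j) a
        rw [if_pos ha']
      exact hVU i j (le_of_lt hij) hYV
    exact hUsub Y Yavoid hYF
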